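/- Let T ⊆ ℝ^p be a closed cone (not necessarily convex) and let N = {v : ⟨w, v⟩ ≤ 0 for all w ∈ T} be its polar cone. Then for any x ∈ ℝ^p and any z that is a nearest point of x in T, one has ‖z‖ ≤ dist(x, N). -/
import Mathlib


open scoped RealInnerProductSpace

theorem stmt0 {p : ℕ} (T : Set (EuclideanSpace ℝ (Fin p)))
    (hTclosed : IsClosed T)
    (hTcone : ∀ c : ℝ, 0 ≤ c → ∀ w ∈ T, c • w ∈ T)
    (N : Set (EuclideanSpace ℝ (Fin p)))
    (hN : N = {v | ∀ w ∈ T, ⟪w, v⟫ ≤ 0})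
    (x z : EuclideanSpace ℝ (Fin p)) (hz : z ∈ T)
    (hnear : ∀ y ∈ T, ‖x - z‖ ≤ ‖x - y‖) :
    ‖z‖ ≤ Metric.infDist x N := by
  -- 0 ∈ N
  have h0N : (0 : EuclideanSpace ℝ (Fin p)) ∈ N := by
    rw [hN]; intro w _; simp
  -- key: ⟪x - z, z⟫ ≥ 0
  have key : ∀ t : ℝ, 0 < t → t ≤ 1 → 0 ≤ 2 * t * ⟪x - z, z⟫ + t^2 * ‖z‖^2 := by
    intro t ht ht1
    have hmem : (1 - t) • z ∈ T := hTcone _ (by linarith) z hz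
    have h := hnear _ hmem
    have hsq : ‖x - z‖^2 ≤ ‖x - (1 - t) • z‖^2 := by
      apply sq_le_sq' <;> nlinarith [norm_nonneg (x - z), norm_nonneg (x - (1-t)•z)]
    have hrw : x - (1 - t) • z = (x - z) + t • z := by
      module
    rw [hrw, @norm_add_sq_real, real_inner_smul_right, norm_smul, Real.norm_eq_abs,
      abs_of_pos ht] at hsq
    nlinarith [hsq]
  have hIz : 0 ≤ ⟪x - z, z⟫ := by
    by_contra h
    push_neg at h
    rcases eq_or_ne (‖z‖) 0 with hz0 | hz0
    · have := key 1 one_pos le_rfl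
      rw [hz0] at this; nlinarith
    · have hzpos : 0 < ‖z‖^2 := by positivity
      set t := min 1 (-⟪x - z, z⟫ / ‖z‖^2) with htdef
      have ht0 : 0 < t := lt_min one_pos (div_pos (by linarith) hzpos)
      have ht1 : t ≤ 1 := min_le_left _ _
      have htI : t * ‖z‖^2 ≤ -⟪x - z, z⟫ := by
        have : t ≤ -⟪x - z, z⟫ / ‖z‖^2 := min_le_right _ _
        calc t * ‖z‖^2 ≤ (-⟪x - z, z⟫ / ‖z‖^2) * ‖z‖^2 := by nlinarith
          _ = -⟪x - z, z⟫ := by field_simp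
      have := key t ht0 ht1
      nlinarith
  have hxz : ‖z‖^2 ≤ ⟪x, z⟫ := by
    have : ⟪x - z, z⟫ = ⟪x, z⟫ - ⟪z, z⟫ := by
      rw [inner_sub_left]
    rw [this, real_inner_self_eq_norm_sq] at hIz
    linarith
  by_contra hlt
  push_neg at hlt
  obtain ⟨v, hv, hdv⟩ := (Metric.infDist_lt_iff ⟨0, h0N⟩).mp hlt
  rw [dist_eq_norm] at hdv
  have hvz : ⟪z, v⟫ ≤ 0 := by
    rw [hN] at hv; exact hv z hz
  have hin : ‖z‖^2 ≤ ⟪x - v, z⟫ := by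
    rw [inner_sub_left]
    have : ⟪v, z⟫ = ⟪z, v⟫ := real_inner_comm z v
    linarith
  have hcs : ⟪x - v, z⟫ ≤ ‖x - v‖ * ‖z‖ := real_inner_le_norm _ _
  nlinarith [norm_nonneg z, norm_nonneg (x - v)]
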